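/- Let $p$ be a subharmonic nonharmonic polynomial, and suppose $\delta \ge |w - z|$. Then $\Lambda(z,\delta) \sim \Lambda(w,\delta)$: there are constants $c, C > 0$ depending only on $\deg p$ such that $c\,\Lambda(w,\delta) \le \Lambda(z,\delta) \le C\,\Lambda(w,\delta)$. -/

import Mathlib

open Finset Complex

/-- The coefficient `A_{jk}(z) = (1/(j!k!)) ∂^{j+k}p/∂z^j∂z̄^k (z)` of the
polynomial `p(z) = ∑_{m,n ≤ d} a m n · z^m · z̄^n`. -/
noncomputable def Acoef (d : ℕ) (a : ℕ → ℕ → ℂ) (j k : ℕ) (z : ℂ) : ℂ :=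
  ∑ m ∈ Finset.range (d + 1), ∑ n ∈ Finset.range (d + 1),
    (m.choose j : ℂ) * (n.choose k : ℂ) * a m n * z ^ (m - j) * (starRingEnd ℂ z) ^ (n - k)

/-- The twist `T(w,z) = -2 Im (∑_{j≥1} (1/j!) ∂^j p/∂z^j (z) (w-z)^j)`. -/
noncomputable def Twist (d : ℕ) (a : ℕ → ℕ → ℂ) (w z : ℂ) : ℝ :=
  -2 * (∑ j ∈ Finset.Icc 1 d, Acoef d a j 0 z * (w - z) ^ j).im

/-- `Λ(z,δ) = ∑_{j,k ≥ 1} |A_{jk}(z)| δ^{j+k}`. -/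
noncomputable def Lam (d : ℕ) (a : ℕ → ℕ → ℂ) (z : ℂ) (δ : ℝ) : ℝ :=
  ∑ j ∈ Finset.Icc 1 d, ∑ k ∈ Finset.Icc 1 d,
    ‖Acoef d a j k z‖ * δ ^ (j + k)

/-- `μ(z,δ) = inf_{j,k ≥ 1, A_{jk}(z) ≠ 0} (|δ|/|A_{jk}(z)|)^{1/(j+k)}`. -/
noncomputable def muF (d : ℕ) (a : ℕ → ℕ → ℂ) (z : ℂ) (δ : ℝ) : ℝ :=
  sInf {x : ℝ | ∃ j k : ℕ, 1 ≤ j ∧ 1 ≤ k ∧ Acoef d a j k z ≠ 0 ∧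
    x = (|δ| / ‖Acoef d a j k z‖) ^ (1 / ((j : ℝ) + (k : ℝ)))}

/-- The Wirtinger derivative `∂f/∂z = (1/2)(∂f/∂x - i ∂f/∂y)`. -/
noncomputable def wDz (f : ℂ → ℂ) (z : ℂ) : ℂ :=
  (fderiv ℝ f z 1 - Complex.I * fderiv ℝ f z Complex.I) / 2

/-- The Wirtinger derivative `∂f/∂z̄ = (1/2)(∂f/∂x + i ∂f/∂y)`. -/
noncomputable def wDzbar (f : ℂ → ℂ) (z : ℂ) : ℂ :=
  (fderiv ℝ f z 1 + Complex.I * fderiv ℝ f z Complex.I) / 2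

/-- The nonisotropic pseudodistance `d_{NI}(z,w,t) = |z-w| + μ(z, t+T(w,z))`. -/
noncomputable def dNI (d : ℕ) (a : ℕ → ℕ → ℂ) (z w : ℂ) (t : ℝ) : ℝ :=
  ‖z - w‖ + muF d a z (t + Twist d a w z)

/-- For a subharmonic, nonharmonic polynomial `p` of degree `d`, if `δ ≥ |w - z|`
then `Λ(z,δ) ∼ Λ(w,δ)` with constants depending only on `d`. -/

lemma nat_key (m j s : ℕ) : (j+s).choose j * m.choose (j+s) = m.choose j * (m-j).choose s := by
  rcases le_or_gt (j+s) m with h | h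
  · have := Nat.choose_mul (n:=m) (k:=j+s) (s:=j) (Nat.le_add_right j s)
    simpa [Nat.add_sub_cancel_left, mul_comm] using this
  · rcases le_or_gt j m with hj | hj
    · rw [Nat.choose_eq_zero_of_lt h, Nat.choose_eq_zero_of_lt (by omega : m - j < s)]; simp
    · rw [Nat.choose_eq_zero_of_lt h, Nat.choose_eq_zero_of_lt hj]; simp

lemma choose_le_two_pow' (n k : ℕ) : n.choose k ≤ 2 ^ n := by
  rcases le_or_gt k n with h|h
  · calc n.choose k ≤ ∑ i ∈ range (n+1), n.choose i :=
        Finset.single_le_sum (fun i _ => Nat.zero_le _) (mem_range.2 (Nat.lt_succ_of_le h))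
    _ = 2^n := Nat.sum_range_choose n
  · simp [Nat.choose_eq_zero_of_lt h]

lemma binom_expand (d m j : ℕ) (hm : m ≤ d) (z w : ℂ) :
    (m.choose j : ℂ) * z ^ (m - j)
      = ∑ s ∈ Finset.range (d + 1),
          ((j + s).choose j : ℂ) * (m.choose (j + s) : ℂ) * w ^ (m - j - s) * (z - w) ^ s := by
  have key : ∀ s, ((j + s).choose j : ℂ) * (m.choose (j + s) : ℂ)
      = (m.choose j : ℂ) * ((m - j).choose s : ℂ) := by
    intro s; exact_mod_cast congrArg (Nat.cast (R := ℂ)) (nat_key m j s)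
  calc (m.choose j : ℂ) * z ^ (m - j)
      = (m.choose j : ℂ) * ((z - w) + w) ^ (m - j) := by ring_nf
    _ = (m.choose j : ℂ) * ∑ s ∈ range (m - j + 1), (z-w)^s * w^(m-j-s) * ((m-j).choose s : ℂ) := by
        rw [add_pow]
    _ = (m.choose j : ℂ) * ∑ s ∈ range (d + 1), (z-w)^s * w^(m-j-s) * ((m-j).choose s : ℂ) := by
        congr 1
        refine Finset.sum_subset ?_ ?_
        · exact Finset.range_subset_range.2 (Nat.succ_le_succ (le_trans (Nat.sub_le m j) hm))
        · intro s _ hs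
          have : m - j < s := by simp only [mem_range] at hs ⊢; omega
          simp [Nat.choose_eq_zero_of_lt this]
    _ = _ := by
        rw [Finset.mul_sum]
        refine Finset.sum_congr rfl fun s _ => ?_
        rw [key]; ring


lemma sum4_swap {M : Type*} [AddCommMonoid M] (A B : Finset ℕ) (F : ℕ → ℕ → ℕ → ℕ → M) :
    ∑ m ∈ A, ∑ n ∈ A, ∑ s ∈ B, ∑ t ∈ B, F m n s t
      = ∑ s ∈ B, ∑ t ∈ B, ∑ m ∈ A, ∑ n ∈ A, F m n s t :=
  calc ∑ m ∈ A, ∑ n ∈ A, ∑ s ∈ B, ∑ t ∈ B, F m n s t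
      = ∑ m ∈ A, ∑ s ∈ B, ∑ n ∈ A, ∑ t ∈ B, F m n s t :=
        Finset.sum_congr rfl fun m _ => Finset.sum_comm
    _ = ∑ s ∈ B, ∑ m ∈ A, ∑ n ∈ A, ∑ t ∈ B, F m n s t := Finset.sum_comm
    _ = ∑ s ∈ B, ∑ m ∈ A, ∑ t ∈ B, ∑ n ∈ A, F m n s t :=
        Finset.sum_congr rfl fun s _ => Finset.sum_congr rfl fun m _ => Finset.sum_comm
    _ = ∑ s ∈ B, ∑ t ∈ B, ∑ m ∈ A, ∑ n ∈ A, F m n s t :=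
        Finset.sum_congr rfl fun s _ => Finset.sum_comm

lemma Acoef_taylor (d : ℕ) (a : ℕ → ℕ → ℂ) (j k : ℕ) (z w : ℂ) :
    Acoef d a j k z = ∑ s ∈ Finset.range (d+1), ∑ t ∈ Finset.range (d+1),
      ((j+s).choose j : ℂ) * ((k+t).choose k : ℂ) * Acoef d a (j+s) (k+t) w
        * (z-w)^s * (starRingEnd ℂ (z-w))^t := by
  have hconj : ∀ (n t : ℕ), True := fun _ _ => trivial
  calc Acoef d a j k z
      = ∑ m ∈ range (d+1), ∑ n ∈ range (d+1),
          ((m.choose j : ℂ) * z ^ (m-j)) * ((n.choose k : ℂ) * (starRingEnd ℂ z) ^ (n-k)) * a m n := by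
        unfold Acoef
        refine sum_congr rfl fun m _ => sum_congr rfl fun n _ => ?_
        ring
    _ = ∑ m ∈ range (d+1), ∑ n ∈ range (d+1),
          (∑ s ∈ range (d+1), ((j+s).choose j : ℂ) * (m.choose (j+s) : ℂ) * w ^ (m-j-s) * (z-w)^s)
        * (∑ t ∈ range (d+1), ((k+t).choose k : ℂ) * (n.choose (k+t) : ℂ) * (starRingEnd ℂ w) ^ (n-k-t) * (starRingEnd ℂ (z-w))^t)
        * a m n := by
        refine sum_congr rfl fun m hm => sum_congr rfl fun n hn => ?_
        rw [mem_range] at hm hn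
        rw [← binom_expand d m j (by omega) z w]
        have := binom_expand d n k (by omega) (starRingEnd ℂ z) (starRingEnd ℂ w)
        rw [← map_sub] at this
        rw [← this]
    _ = ∑ m ∈ range (d+1), ∑ n ∈ range (d+1), ∑ s ∈ range (d+1), ∑ t ∈ range (d+1),
          (((j+s).choose j : ℂ) * (m.choose (j+s) : ℂ) * w ^ (m-j-s) * (z-w)^s)
        * (((k+t).choose k : ℂ) * (n.choose (k+t) : ℂ) * (starRingEnd ℂ w) ^ (n-k-t) * (starRingEnd ℂ (z-w))^t)
        * a m n := by
        refine sum_congr rfl fun m _ => sum_congr rfl fun n _ => ?_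
        rw [Finset.sum_mul_sum, Finset.sum_mul]
        refine sum_congr rfl fun s _ => ?_
        rw [Finset.sum_mul]
    _ = ∑ s ∈ range (d+1), ∑ t ∈ range (d+1),
          ∑ m ∈ range (d+1), ∑ n ∈ range (d+1),
          (((j+s).choose j : ℂ) * (m.choose (j+s) : ℂ) * w ^ (m-j-s) * (z-w)^s)
        * (((k+t).choose k : ℂ) * (n.choose (k+t) : ℂ) * (starRingEnd ℂ w) ^ (n-k-t) * (starRingEnd ℂ (z-w))^t)
        * a m n := by
        exact sum4_swap _ _ _
    _ = _ := by
        refine sum_congr rfl fun s _ => sum_congr rfl fun t _ => ?_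
        simp only [Acoef, Finset.mul_sum, Finset.sum_mul]
        refine sum_congr rfl fun m _ => sum_congr rfl fun n _ => ?_
        rw [show m - (j+s) = m - j - s from (Nat.sub_sub m j s).symm,
            show n - (k+t) = n - k - t from (Nat.sub_sub n k t).symm]
        ring


lemma Acoef_zero_left {d : ℕ} {a : ℕ → ℕ → ℂ} {J K : ℕ} (hJ : d < J) (w : ℂ) :
    Acoef d a J K w = 0 := by
  refine Finset.sum_eq_zero fun m hm => Finset.sum_eq_zero fun n _ => ?_
  rw [mem_range] at hm
  rw [Nat.choose_eq_zero_of_lt (show m < J by omega)]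
  simp

lemma Acoef_zero_right {d : ℕ} {a : ℕ → ℕ → ℂ} {J K : ℕ} (hK : d < K) (w : ℂ) :
    Acoef d a J K w = 0 := by
  refine Finset.sum_eq_zero fun m _ => Finset.sum_eq_zero fun n hn => ?_
  rw [mem_range] at hn
  rw [Nat.choose_eq_zero_of_lt (show n < K by omega)]
  simp

lemma Lam_nonneg (d : ℕ) (a : ℕ → ℕ → ℂ) (w : ℂ) {δ : ℝ} (hδ : 0 ≤ δ) :
    0 ≤ Lam d a w δ :=
  Finset.sum_nonneg fun j _ => Finset.sum_nonneg fun k _ => by positivity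

lemma term_le_Lam (d : ℕ) (a : ℕ → ℕ → ℂ) (w : ℂ) {δ : ℝ} (hδ : 0 ≤ δ) {J K : ℕ}
    (hJ : J ∈ Finset.Icc 1 d) (hK : K ∈ Finset.Icc 1 d) :
    ‖Acoef d a J K w‖ * δ ^ (J + K) ≤ Lam d a w δ := by
  have h1 : ‖Acoef d a J K w‖ * δ ^ (J + K)
      ≤ ∑ k ∈ Finset.Icc 1 d, ‖Acoef d a J k w‖ * δ ^ (J + k) :=
    Finset.single_le_sum (f := fun k => ‖Acoef d a J k w‖ * δ ^ (J + k))
      (fun k _ => by positivity) hK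
  refine le_trans h1 ?_
  exact Finset.single_le_sum (f := fun j => ∑ k ∈ Finset.Icc 1 d,
      ‖Acoef d a j k w‖ * δ ^ (j + k))
    (fun j _ => Finset.sum_nonneg fun k _ => by positivity) hJ

lemma lam_le (d : ℕ) (a : ℕ → ℕ → ℂ) (z w : ℂ) {δ : ℝ}
    (h : ‖z - w‖ ≤ δ) :
    Lam d a z δ ≤ ((d:ℝ)^2 * ((d:ℝ)+1)^2 * 16^d) * Lam d a w δ := by
  have hδ : 0 ≤ δ := le_trans (norm_nonneg _) h
  have hLw : 0 ≤ Lam d a w δ := Lam_nonneg d a w hδ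
  have key : ∀ j k : ℕ, j ∈ Finset.Icc 1 d → k ∈ Finset.Icc 1 d →
      ‖Acoef d a j k z‖ * δ ^ (j + k)
        ≤ ((d:ℝ)+1)^2 * 16^d * Lam d a w δ := by
    intro j k hj hk
    rw [mem_Icc] at hj hk
    have step1 : ‖Acoef d a j k z‖ * δ ^ (j + k)
        ≤ (∑ s ∈ range (d+1), ∑ t ∈ range (d+1),
            ((j+s).choose j : ℝ) * ((k+t).choose k : ℝ)
              * ‖Acoef d a (j+s) (k+t) w‖ * δ^s * δ^t) * δ ^ (j+k) := by
      refine mul_le_mul_of_nonneg_right ?_ (by positivity)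
      rw [Acoef_taylor d a j k z w]
      refine le_trans (norm_sum_le _ _) ?_
      refine Finset.sum_le_sum fun s _ => ?_
      refine le_trans (norm_sum_le _ _) ?_
      refine Finset.sum_le_sum fun t _ => ?_
      rw [norm_mul, norm_mul, norm_mul, norm_mul, norm_pow, norm_pow,
        Complex.norm_natCast, Complex.norm_natCast, Complex.norm_conj]
      have h1 : ‖z - w‖ ^ s ≤ δ ^ s :=
        pow_le_pow_left₀ (norm_nonneg _) h s
      have h2 : ‖z - w‖ ^ t ≤ δ ^ t :=
        pow_le_pow_left₀ (norm_nonneg _) h t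
      exact mul_le_mul (mul_le_mul_of_nonneg_left h1 (by positivity)) h2
        (by positivity) (by positivity)
    refine le_trans step1 ?_
    rw [Finset.sum_mul]
    simp only [Finset.sum_mul]
    have step2 : ∀ s t : ℕ, s ∈ range (d+1) → t ∈ range (d+1) →
        ((j+s).choose j : ℝ) * ((k+t).choose k : ℝ)
          * ‖Acoef d a (j+s) (k+t) w‖ * δ^s * δ^t * δ ^ (j+k)
        ≤ 16^d * Lam d a w δ := by
      intro s t hs ht
      rw [mem_range] at hs ht
      have hb1 : ((j+s).choose j : ℝ) ≤ 4^d := by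
        have h1 : ((j+s).choose j : ℝ) ≤ (2:ℝ)^(j+s) := by
          exact_mod_cast choose_le_two_pow' (j+s) j
        refine h1.trans ?_
        have h2 : (2:ℝ)^(j+s) ≤ (2:ℝ)^(2*d) :=
          pow_le_pow_right₀ one_le_two (by omega)
        refine h2.trans_eq ?_
        rw [pow_mul]; norm_num
      have hb2 : ((k+t).choose k : ℝ) ≤ 4^d := by
        have h1 : ((k+t).choose k : ℝ) ≤ (2:ℝ)^(k+t) := by
          exact_mod_cast choose_le_two_pow' (k+t) k
        refine h1.trans ?_
        have h2 : (2:ℝ)^(k+t) ≤ (2:ℝ)^(2*d) :=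
          pow_le_pow_right₀ one_le_two (by omega)
        refine h2.trans_eq ?_
        rw [pow_mul]; norm_num
      have hA : ‖Acoef d a (j+s) (k+t) w‖ * δ ^ ((j+s)+(k+t))
          ≤ Lam d a w δ := by
        rcases le_or_gt (j+s) d with hJd | hJd
        · rcases le_or_gt (k+t) d with hKd | hKd
          · exact term_le_Lam d a w hδ (mem_Icc.2 ⟨by omega, hJd⟩) (mem_Icc.2 ⟨by omega, hKd⟩)
          · rw [Acoef_zero_right hKd]; simpa using hLw
        · rw [Acoef_zero_left hJd]; simpa using hLw
      have e1 : ((j+s).choose j : ℝ) * ((k+t).choose k : ℝ)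
          * ‖Acoef d a (j+s) (k+t) w‖ * δ^s * δ^t * δ ^ (j+k)
          = (((j+s).choose j : ℝ) * ((k+t).choose k : ℝ))
            * (‖Acoef d a (j+s) (k+t) w‖ * δ ^ ((j+s)+(k+t))) := by
        rw [show (j+s)+(k+t) = j + k + (s + t) by ring, pow_add, pow_add, pow_add]
        ring
      rw [e1]
      refine le_trans (mul_le_mul (mul_le_mul hb1 hb2 (by positivity) (by positivity)) hA
        (by positivity) (by positivity)) ?_
      refine le_of_eq ?_
      rw [show (4:ℝ)^d * 4^d = 16^d by rw [← mul_pow]; norm_num]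
    refine le_trans (Finset.sum_le_sum fun s hs => Finset.sum_le_sum fun t ht =>
      step2 s t hs ht) ?_
    rw [Finset.sum_const, Finset.sum_const, card_range, nsmul_eq_mul, nsmul_eq_mul]
    refine le_of_eq ?_
    push_cast; ring
  unfold Lam
  refine le_trans (Finset.sum_le_sum fun j hj => Finset.sum_le_sum fun k hk =>
    key j k hj hk) ?_
  rw [Finset.sum_const, Finset.sum_const, Nat.card_Icc, Nat.add_sub_cancel,
    nsmul_eq_mul, nsmul_eq_mul]
  refine le_of_eq ?_
  unfold Lam
  push_cast
  ring

theorem lam_comparable (d : ℕ) :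
    ∃ c C : ℝ, 0 < c ∧ 0 < C ∧
      ∀ a : ℕ → ℕ → ℂ,
        (∀ m n, d < m + n → a m n = 0) →
        (∀ m n, (starRingEnd ℂ) (a m n) = a n m) →
        (∀ z : ℂ, 0 ≤ (Acoef d a 1 1 z).re) →
        (∃ z₀ : ℂ, Acoef d a 1 1 z₀ ≠ 0) →
        ∀ (z w : ℂ) (δ : ℝ), ‖w - z‖ ≤ δ →
          c * Lam d a w δ ≤ Lam d a z δ ∧ Lam d a z δ ≤ C * Lam d a w δ := by
  refine ⟨((d:ℝ)^2*((d:ℝ)+1)^2*16^d + 1)⁻¹, (d:ℝ)^2*((d:ℝ)+1)^2*16^d + 1, ?_, ?_, ?_⟩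
  · have : (0:ℝ) ≤ (d:ℝ)^2*((d:ℝ)+1)^2*16^d := by positivity
    exact inv_pos.2 (by linarith)
  · have : (0:ℝ) ≤ (d:ℝ)^2*((d:ℝ)+1)^2*16^d := by positivity
    linarith
  · intro a _ _ _ _ z w δ hwz
    have hδ : 0 ≤ δ := (norm_nonneg _).trans hwz
    have hK : (0:ℝ) ≤ (d:ℝ)^2*((d:ℝ)+1)^2*16^d := by positivity
    have hC : (0:ℝ) < (d:ℝ)^2*((d:ℝ)+1)^2*16^d + 1 := by linarith
    have hLz : 0 ≤ Lam d a z δ := Lam_nonneg d a z hδ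
    have hLw : 0 ≤ Lam d a w δ := Lam_nonneg d a w hδ
    have h1 : Lam d a z δ ≤ ((d:ℝ)^2*((d:ℝ)+1)^2*16^d) * Lam d a w δ :=
      lam_le d a z w (by rwa [norm_sub_rev])
    have h2 : Lam d a w δ ≤ ((d:ℝ)^2*((d:ℝ)+1)^2*16^d) * Lam d a z δ :=
      lam_le d a w z hwz
    constructor
    · rw [inv_mul_le_iff₀ hC]
      nlinarith
    · nlinarith
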